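/- The kernel K = ker φ is generated, as a subgroup of F, by the set of all two-letter words of the form uv⁻¹ and u⁻¹v where u and v are distinct elements of {a, b, c, d}. -/

import Mathlib

/-- `F₂`, the free group on two generators. -/
abbrev F2 : Type := FreeGroup (Fin 2)

/-- `a`, a free generator of the first factor of `F₂ × F₂`. -/
def a : F2 × F2 := (FreeGroup.of 0, 1)
/-- `b`, a free generator of the first factor of `F₂ × F₂`. -/
def b : F2 × F2 := (FreeGroup.of 1, 1)
/-- `c`, a free generator of the second factor of `F₂ × F₂`. -/
def c : F2 × F2 := (1, FreeGroup.of 0)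
/-- `d`, a free generator of the second factor of `F₂ × F₂`. -/
def d : F2 × F2 := (1, FreeGroup.of 1)

open Multiplicative

private def σ : F2 →* Multiplicative ℤ := FreeGroup.lift (fun _ => ofAdd 1)

private lemma sigma_of (i : Fin 2) : σ (FreeGroup.of i) = ofAdd 1 := FreeGroup.lift_apply_of

private lemma of_ne_one (i : Fin 2) : (FreeGroup.of i : F2) ≠ 1 := by
  intro h
  have := congrArg σ h
  simp [sigma_of] at this

private lemma a_ne_c : a ≠ c := by
  intro h; exact of_ne_one 0 (congrArg Prod.fst h)
private lemma a_ne_d : a ≠ d := by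
  intro h; exact of_ne_one 0 (congrArg Prod.fst h)
private lemma b_ne_c : b ≠ c := by
  intro h; exact of_ne_one 1 (congrArg Prod.fst h)
private lemma b_ne_d : b ≠ d := by
  intro h; exact of_ne_one 1 (congrArg Prod.fst h)
private lemma c_ne_a : c ≠ a := fun h => a_ne_c h.symm

private def Sgen : Set (F2 × F2) :=
  {x : F2 × F2 | ∃ u ∈ ({a, b, c, d} : Set (F2 × F2)), ∃ v ∈ ({a, b, c, d} : Set (F2 × F2)),
        u ≠ v ∧ (x = u * v⁻¹ ∨ x = u⁻¹ * v)}

private def H : Subgroup (F2 × F2) := Subgroup.closure Sgen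

private lemma mem_Sgen_l {u v : F2 × F2} (hu : u ∈ ({a, b, c, d} : Set (F2 × F2)))
    (hv : v ∈ ({a, b, c, d} : Set (F2 × F2))) (h : u ≠ v) : u * v⁻¹ ∈ Sgen :=
  ⟨u, hu, v, hv, h, Or.inl rfl⟩

private lemma mem_Sgen_r {u v : F2 × F2} (hu : u ∈ ({a, b, c, d} : Set (F2 × F2)))
    (hv : v ∈ ({a, b, c, d} : Set (F2 × F2))) (h : u ≠ v) : u⁻¹ * v ∈ Sgen :=
  ⟨u, hu, v, hv, h, Or.inr rfl⟩

private lemma comm_fst_snd (x y : F2) : Commute ((x, 1) : F2 × F2) ((1, y) : F2 × F2) := by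
  show _ = _
  simp [Prod.mk_mul_mk]

private lemma comm_fst_c (x : F2) (k : ℤ) : Commute ((x, 1) : F2 × F2) (c ^ k) :=
  (comm_fst_snd x (FreeGroup.of 0)).zpow_right k

private lemma comm_a_snd (y : F2) (k : ℤ) : Commute (a ^ k) ((1, y) : F2 × F2) :=
  ((comm_fst_snd (FreeGroup.of 0) y).zpow_left k)

private lemma P_mem (x : F2) : ((x, 1) : F2 × F2) * c ^ (-(σ x).toAdd) ∈ H := by
  induction x using FreeGroup.induction_on with
  | C1 => simp; exact H.one_mem
  | of i =>
    show ((FreeGroup.of i, 1) : F2 × F2) * c ^ (-(σ (FreeGroup.of i)).toAdd) ∈ H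
    have h1 : (σ (FreeGroup.of i)).toAdd = 1 := by rw [sigma_of]; rfl
    rw [h1]
    fin_cases i
    · exact Subgroup.subset_closure (by simpa [a] using mem_Sgen_l (by simp) (by simp) a_ne_c)
    · exact Subgroup.subset_closure (by simpa [b] using mem_Sgen_l (by simp) (by simp) b_ne_c)
  | inv_of i ih =>
    show (((FreeGroup.of i)⁻¹, 1) : F2 × F2) * c ^ (-(σ (FreeGroup.of i)⁻¹).toAdd) ∈ H
    have h1 : (σ (FreeGroup.of i)⁻¹).toAdd = -1 := by rw [map_inv, sigma_of]; rfl
    rw [h1]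
    fin_cases i
    · exact Subgroup.subset_closure (by simpa [a] using mem_Sgen_r (by simp) (by simp) a_ne_c)
    · exact Subgroup.subset_closure (by simpa [b] using mem_Sgen_r (by simp) (by simp) b_ne_c)
  | mul x y hx hy =>
    have h1 : (σ (x * y)).toAdd = (σ x).toAdd + (σ y).toAdd := by simp [map_mul]
    have e : ((x * y, 1) : F2 × F2) * c ^ (-(σ (x * y)).toAdd)
        = (((x, 1) : F2 × F2) * c ^ (-(σ x).toAdd)) * (((y, 1) : F2 × F2) * c ^ (-(σ y).toAdd)) := by
      rw [h1, neg_add, zpow_add,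
        show ((x * y, 1) : F2 × F2) = (x, 1) * (y, 1) by simp [Prod.mk_mul_mk],
        Commute.mul_mul_mul_comm ((comm_fst_c y (-(σ x).toAdd)).symm)]
    rw [e]
    exact H.mul_mem hx hy

private lemma Q_mem (y : F2) : a ^ (-(σ y).toAdd) * ((1, y) : F2 × F2) ∈ H := by
  induction y using FreeGroup.induction_on with
  | C1 => simp; exact H.one_mem
  | of i =>
    show a ^ (-(σ (FreeGroup.of i)).toAdd) * ((1, FreeGroup.of i) : F2 × F2) ∈ H
    have h1 : (σ (FreeGroup.of i)).toAdd = 1 := by rw [sigma_of]; rfl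
    rw [h1]
    fin_cases i
    · exact Subgroup.subset_closure (by simpa [c] using mem_Sgen_r (by simp) (by simp) a_ne_c)
    · exact Subgroup.subset_closure (by simpa [d] using mem_Sgen_r (by simp) (by simp) a_ne_d)
  | inv_of i ih =>
    show a ^ (-(σ (FreeGroup.of i)⁻¹).toAdd) * ((1, (FreeGroup.of i)⁻¹) : F2 × F2) ∈ H
    have h1 : (σ (FreeGroup.of i)⁻¹).toAdd = -1 := by rw [map_inv, sigma_of]; rfl
    rw [h1]
    fin_cases i
    · exact Subgroup.subset_closure (by simpa [c] using mem_Sgen_l (by simp) (by simp) a_ne_c)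
    · exact Subgroup.subset_closure (by simpa [d] using mem_Sgen_l (by simp) (by simp) a_ne_d)
  | mul x y hx hy =>
    have h1 : (σ (x * y)).toAdd = (σ x).toAdd + (σ y).toAdd := by simp [map_mul]
    have e : a ^ (-(σ (x * y)).toAdd) * ((1, x * y) : F2 × F2)
        = (a ^ (-(σ x).toAdd) * ((1, x) : F2 × F2)) * (a ^ (-(σ y).toAdd) * ((1, y) : F2 × F2)) := by
      rw [h1, neg_add, zpow_add,
        show ((1, x * y) : F2 × F2) = (1, x) * (1, y) by simp [Prod.mk_mul_mk],
        Commute.mul_mul_mul_comm ((comm_a_snd x (-(σ y).toAdd)).symm)]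
    rw [e]
    exact H.mul_mem hx hy

/-- `K = ker φ` is generated by the set of all two-letter words `uv⁻¹` and `u⁻¹v` where `u, v`
are distinct elements of `{a, b, c, d}`. -/
theorem stmt_2 (φ : F2 × F2 →* Multiplicative ℤ)
    (ha : φ a = Multiplicative.ofAdd 1) (hb : φ b = Multiplicative.ofAdd 1)
    (hc : φ c = Multiplicative.ofAdd 1) (hd : φ d = Multiplicative.ofAdd 1) :
    Subgroup.closure
      {x : F2 × F2 | ∃ u ∈ ({a, b, c, d} : Set (F2 × F2)), ∃ v ∈ ({a, b, c, d} : Set (F2 × F2)),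
        u ≠ v ∧ (x = u * v⁻¹ ∨ x = u⁻¹ * v)} = φ.ker := by
  show H = φ.ker
  apply le_antisymm
  · rw [H, Subgroup.closure_le]
    rintro x ⟨u, hu, v, hv, -, rfl | rfl⟩ <;>
    · have hu' : φ u = ofAdd 1 := by
        rcases hu with rfl | rfl | rfl | rfl <;> assumption
      have hv' : φ v = ofAdd 1 := by
        rcases hv with rfl | rfl | rfl | rfl <;> assumption
      simp [MonoidHom.mem_ker, map_mul, map_inv, hu', hv']
  · -- first, φ agrees with σ on each factor
    have hfst : ∀ x : F2, φ ((x, 1) : F2 × F2) = σ x := by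
      have : φ.comp (MonoidHom.inl F2 F2) = σ := by
        apply FreeGroup.ext_hom
        intro i
        fin_cases i
        · simpa [sigma_of, a] using ha
        · simpa [sigma_of, b] using hb
      intro x
      simpa using congrFun (congrArg (↑·) this) x
    have hsnd : ∀ y : F2, φ ((1, y) : F2 × F2) = σ y := by
      have : φ.comp (MonoidHom.inr F2 F2) = σ := by
        apply FreeGroup.ext_hom
        intro i
        fin_cases i
        · simpa [sigma_of, c] using hc
        · simpa [sigma_of, d] using hd
      intro y
      simpa using congrFun (congrArg (↑·) this) y
    rintro ⟨x₁, x₂⟩ hx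
    have hx' : φ ((x₁, x₂) : F2 × F2) = 1 := hx
    have hsum : (σ x₁).toAdd + (σ x₂).toAdd = 0 := by
      have : σ x₁ * σ x₂ = 1 := by
        rw [← hfst x₁, ← hsnd x₂, ← map_mul]
        simpa [Prod.mk_mul_mk] using hx'
      simpa [← toAdd_mul] using congrArg toAdd this
    set n : ℤ := (σ x₁).toAdd with hn
    have hm : -(σ x₂).toAdd = n := by omega
    have e : ((x₁, x₂) : F2 × F2)
        = (((x₁, 1) : F2 × F2) * c ^ (-n)) * ((c * a⁻¹) ^ n
          * (a ^ n * ((1, x₂) : F2 × F2))) := by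
      have hAC : Commute c a⁻¹ :=
        (comm_fst_snd (FreeGroup.of 0) (FreeGroup.of 0)).symm.inv_right
      have hca : (c * a⁻¹) ^ n = c ^ n * a ^ (-n) := by
        rw [hAC.mul_zpow, inv_zpow, ← zpow_neg]
      rw [hca]
      group
      simp [Prod.mk_mul_mk]
    rw [e]
    refine H.mul_mem (P_mem x₁) (H.mul_mem (H.zpow_mem (Subgroup.subset_closure
      (mem_Sgen_l (by simp) (by simp) c_ne_a)) n) ?_)
    rw [← hm]
    exact Q_mem x₂
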